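/- For σv, σu > 0 and σε ≥ 0, define total expected absolute volume Q = √(2/π)·(√(σu²+σε²) + σu) and break-even fee rate f = S(σε)/Q with S(σε) = σv·σε²/(2√(σu²+σε²)). Then the informed trader's fee burden f·√(2/π)·√(σu²+σε²) equals (σv/2)·(√(σu²+σε²) − σu), which equals the informed trader's incremental gain πI(σε) − πI(0). -/

import Mathlib

/-- The informed trader's volume-share of the break-even fee equals its
incremental privacy gain. -/
theorem stmt_18 (σv σu σε : ℝ) (hv : 0 < σv) (hu : 0 < σu) (he : 0 ≤ σε)
    (Q f : ℝ)
    (hQ : Q = Real.sqrt (2 / Real.pi) * (Real.sqrt (σu ^ 2 + σε ^ 2) + σu))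
    (hf : f = σv * σε ^ 2 / (2 * Real.sqrt (σu ^ 2 + σε ^ 2)) / Q) :
    f * (Real.sqrt (2 / Real.pi) * Real.sqrt (σu ^ 2 + σε ^ 2))
      = σv / 2 * (Real.sqrt (σu ^ 2 + σε ^ 2) - σu) ∧
    σv / 2 * (Real.sqrt (σu ^ 2 + σε ^ 2) - σu)
      = (1 / 2) * σv * Real.sqrt (σu ^ 2 + σε ^ 2)
        - (1 / 2) * σv * Real.sqrt (σu ^ 2 + (0 : ℝ) ^ 2) := by
  set s := Real.sqrt (σu ^ 2 + σε ^ 2) with hs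
  have hs2 : s ^ 2 = σu ^ 2 + σε ^ 2 := by
    rw [hs, Real.sq_sqrt]; positivity
  have hspos : 0 < s := by
    rw [hs]; apply Real.sqrt_pos.mpr; positivity
  have hcoef : 0 < Real.sqrt (2 / Real.pi) := by
    apply Real.sqrt_pos.mpr
    positivity
  have hs0 : Real.sqrt (σu ^ 2 + (0:ℝ) ^ 2) = σu := by
    simp [Real.sqrt_sq hu.le]
  constructor
  · rw [hf, hQ]
    have hsum : 0 < s + σu := by linarith
    have hε : σε ^ 2 = (s - σu) * (s + σu) := by nlinarith [hs2]
    field_simp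
    linear_combination hε
  · rw [hs0]; ring
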